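/- For r ≥ 3, the probability measure ν^r on I^r = [1/(r−1), 1] ∪ {∞} with density dν^r/dy = 1/((r−2)(r−1)^{1/(r−2)} y^{(r−1)/(r−2)}) on (1/(r−1), 1) and atom ν^r({∞}) = 1/(r−1)^{1/(r−2)} satisfies the r-regular frozen percolation RDE: if Y₁,…,Y_{r−1} are i.i.d. with law ν^r, independent of U ~ Uniform[0,1], then Φ(Y₁ ∧ ⋯ ∧ Y_{r−1}; U) also has law ν^r, where Φ(x;u) = x if x > u and ∞ otherwise. -/

import Mathlib

open MeasureTheory ENNReal

/-- The frozen percolation map `Φ(x;u) = x` if `x > u`, `∞` otherwise. -/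
noncomputable def frozenPhi (x : ℝ≥0∞) (u : ℝ) : ℝ≥0∞ :=
  if ENNReal.ofReal u < x then x else ⊤

/-- The measure `ν^r` on `[1/(r-1),1] ∪ {∞} ⊆ ℝ≥0∞`: density
`1/((r-2)(r-1)^{1/(r-2)} y^{(r-1)/(r-2)})` on `(1/(r-1),1)` and atom
`(r-1)^{-1/(r-2)}` at `∞`. -/
noncomputable def nuR (r : ℕ) : Measure ℝ≥0∞ :=
  Measure.map ENNReal.ofReal
      ((volume.restrict (Set.Ioo (1/((r:ℝ)-1)) 1)).withDensity
        (fun y => ENNReal.ofReal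
          (1 / (((r:ℝ)-2) * ((r:ℝ)-1) ^ ((1:ℝ)/((r:ℝ)-2)) *
            y ^ (((r:ℝ)-1)/((r:ℝ)-2)))))) +
    ENNReal.ofReal (1 / ((r:ℝ)-1) ^ ((1:ℝ)/((r:ℝ)-2))) • Measure.dirac ⊤

open Set

/-- auxiliary Pareto-type measure on `[1/b,1] ∪ {∞}`. -/
noncomputable def par (b e : ℝ) : Measure ℝ≥0∞ :=
  Measure.map ENNReal.ofReal
      ((volume.restrict (Set.Ioo (1/b) 1)).withDensity
        (fun y => ENNReal.ofReal (e * b ^ (-e) * y ^ (-(1+e))))) +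
    ENNReal.ofReal (b ^ (-e)) • Measure.dirac ⊤

lemma intPar {b e : ℝ} (hb : 1 < b) (he : 0 < e) {x : ℝ} (hx1 : x ≤ 1) :
    ∫⁻ y in Set.Ioo (1/b) x, ENNReal.ofReal (e * b ^ (-e) * y ^ (-(1+e))) ∂volume
      = ENNReal.ofReal (1 - (b * max (1/b) x) ^ (-e)) := by
  have hb0 : (0:ℝ) < b := lt_trans one_pos hb
  have ha0 : (0:ℝ) < 1/b := by positivity
  rcases le_or_gt x (1/b) with hle | hlt
  · rw [Set.Ioo_eq_empty (by simpa using hle), Measure.restrict_empty, lintegral_zero_measure]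
    rw [max_eq_left hle, mul_one_div_cancel hb0.ne', Real.one_rpow]
    simp
  · rw [max_eq_right hlt.le]
    have hint : IntegrableOn (fun y : ℝ => e * b ^ (-e) * y ^ (-(1+e))) (Set.Ioo (1/b) x) volume := by
      apply IntegrableOn.mono_set (t := Set.Icc (1/b) x)
      · apply ContinuousOn.integrableOn_Icc
        apply ContinuousOn.mul continuousOn_const
        intro y hy
        exact (Real.continuousAt_rpow_const y _ (Or.inl (by nlinarith [hy.1]))).continuousWithinAt
      · exact Set.Ioo_subset_Icc_self
    rw [← ofReal_integral_eq_lintegral_ofReal hint]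
    · congr 1
      rw [← MeasureTheory.integral_Ioc_eq_integral_Ioo, ← intervalIntegral.integral_of_le hlt.le,
        intervalIntegral.integral_const_mul, integral_rpow]
      · have h1 : -(1+e) + 1 = -e := by ring
        rw [h1]
        have hai : (1/b : ℝ) ^ (-e) = b ^ e := by
          rw [one_div, Real.inv_rpow hb0.le, ← Real.rpow_neg hb0.le, neg_neg]
        have hbe : b ^ (-e) * b ^ e = 1 := by
          rw [← Real.rpow_add hb0]; simp
        rw [hai, Real.mul_rpow hb0.le (le_of_lt (lt_trans ha0 hlt))]
        have he' : (e:ℝ) ≠ 0 := ne_of_gt he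
        have : e * b ^ (-e) * ((x ^ (-e) - b ^ e) / (-e)) = b^(-e)*b^e - b^(-e) * x^(-e) := by
          rw [div_neg]
          calc e * b ^ (-e) * -((x ^ (-e) - b ^ e) / e)
              = (e * e⁻¹) * (b^(-e)*b^e - b^(-e) * x^(-e)) := by rw [div_eq_mul_inv]; ring
            _ = b^(-e)*b^e - b^(-e) * x^(-e) := by rw [mul_inv_cancel₀ he', one_mul]
        rw [this, hbe]
      · right
        constructor
        · intro h
          have : e = 0 := by linarith [neg_eq_iff_eq_neg.mp h]
          exact (ne_of_gt he) this
        · intro h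
          rcases Set.mem_uIcc.mp h with ⟨h1, _⟩ | ⟨_, h2⟩
          · linarith
          · linarith
    · filter_upwards [self_mem_ae_restrict measurableSet_Ioo] with y hy
      have : (0:ℝ) < y := lt_trans ha0 hy.1
      positivity

lemma preim_ofReal_Iic (s : ℝ) :
    ENNReal.ofReal ⁻¹' (Set.Iic (ENNReal.ofReal s)) = Set.Iic (max s 0) := by
  ext y
  simp [ENNReal.ofReal_le_ofReal_iff', le_max_iff]

lemma par_Iic {b e : ℝ} (hb : 1 < b) (he : 0 < e) (s : ℝ) :
    par b e (Set.Iic (ENNReal.ofReal s))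
      = ENNReal.ofReal (1 - (b * max (1/b) (min s 1)) ^ (-e)) := by
  have hb0 : (0:ℝ) < b := lt_trans one_pos hb
  have ha0 : (0:ℝ) < 1/b := by positivity
  have ha1 : (1:ℝ)/b < 1 := by rw [div_lt_one hb0]; exact hb
  rw [par, Measure.add_apply, Measure.smul_apply, Measure.dirac_apply' _ measurableSet_Iic,
    Set.indicator_of_notMem (by simp : (⊤:ℝ≥0∞) ∉ Set.Iic (ENNReal.ofReal s)),
    smul_zero, add_zero,
    Measure.map_apply ENNReal.measurable_ofReal measurableSet_Iic,
    preim_ofReal_Iic, withDensity_apply _ measurableSet_Iic,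
    Measure.restrict_restrict measurableSet_Iic]
  rcases le_or_gt 1 s with hs1 | hs1
  · have hset : Set.Iic (max s 0) ∩ Set.Ioo (1/b) 1 = Set.Ioo (1/b) 1 := by
      apply Set.inter_eq_self_of_subset_right
      intro y hy
      exact le_max_of_le_left (le_trans hy.2.le hs1)
    rw [hset, intPar hb he le_rfl, min_eq_right hs1, max_eq_right ha1.le]
  · have hset : Set.Iic (max s 0) ∩ Set.Ioo (1/b) 1 = Set.Ioc (1/b) (max s 0) := by
      ext y
      constructor
      · rintro ⟨h1, h2, _⟩; exact ⟨h2, h1⟩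
      · rintro ⟨h1, h2⟩
        exact ⟨h2, h1, lt_of_le_of_lt h2 (max_lt hs1 one_pos)⟩
    rw [hset, Measure.restrict_congr_set (MeasureTheory.Ioo_ae_eq_Ioc).symm,
      intPar hb he (le_of_lt (max_lt hs1 one_pos)), min_eq_left hs1.le]
    congr 3
    rcases le_or_gt s 0 with hs0 | hs0
    · rw [max_eq_right hs0, max_eq_left ha0.le, max_eq_left (le_trans hs0 ha0.le)]
    · rw [max_eq_left hs0.le]

lemma par_univ {b e : ℝ} (hb : 1 < b) (he : 0 < e) : par b e Set.univ = 1 := by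
  have hb0 : (0:ℝ) < b := lt_trans one_pos hb
  have ha1 : (1:ℝ)/b < 1 := by rw [div_lt_one hb0]; exact hb
  rw [par, Measure.add_apply, Measure.smul_apply, Measure.dirac_apply' _ MeasurableSet.univ,
    Measure.map_apply ENNReal.measurable_ofReal MeasurableSet.univ, Set.preimage_univ,
    withDensity_apply _ MeasurableSet.univ, setLIntegral_univ]
  rw [intPar hb he le_rfl, max_eq_right ha1.le, mul_one, Set.indicator_univ,
    smul_eq_mul, Pi.one_apply, mul_one,
    ← ENNReal.ofReal_add (by
      have : b ^ (-e) ≤ 1 := Real.rpow_le_one_of_one_le_of_nonpos hb.le (neg_nonpos.mpr he.le)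
      linarith) (Real.rpow_nonneg hb0.le _)]
  norm_num

lemma par_prob {b e : ℝ} (hb : 1 < b) (he : 0 < e) : IsProbabilityMeasure (par b e) :=
  ⟨par_univ hb he⟩

lemma bx_facts {b : ℝ} (hb : 1 < b) (s : ℝ) : 1 ≤ b * max (1/b) (min s 1) := by
  have hb0 : (0:ℝ) < b := lt_trans one_pos hb
  calc (1:ℝ) = b * (1/b) := by field_simp
    _ ≤ b * max (1/b) (min s 1) := by
        exact mul_le_mul_of_nonneg_left (le_max_left _ _) hb0.le

lemma par_Ioi {b e : ℝ} (hb : 1 < b) (he : 0 < e) (s : ℝ) :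
    par b e (Set.Ioi (ENNReal.ofReal s))
      = ENNReal.ofReal ((b * max (1/b) (min s 1)) ^ (-e)) := by
  haveI := par_prob hb he
  have hX1 : (b * max (1/b) (min s 1)) ^ (-e) ≤ 1 :=
    Real.rpow_le_one_of_one_le_of_nonpos (bx_facts hb s) (neg_nonpos.mpr he.le)
  have hX0 : (0:ℝ) ≤ (b * max (1/b) (min s 1)) ^ (-e) :=
    Real.rpow_nonneg (le_trans zero_le_one (bx_facts hb s)) _
  rw [← Set.compl_Iic, prob_compl_eq_one_sub measurableSet_Iic, par_Iic hb he]
  rw [← ENNReal.ofReal_one, ← ENNReal.ofReal_sub _ (by linarith)]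
  congr 1
  ring

lemma lt_iInf_iff_forall {n : ℕ} (hn : n ≠ 0) (y : Fin n → ℝ≥0∞) (a : ℝ≥0∞) :
    a < ⨅ i, y i ↔ ∀ i, a < y i := by
  constructor
  · intro h i; exact lt_of_lt_of_le h (iInf_le _ i)
  · intro h
    haveI : Nonempty (Fin n) := Fin.pos_iff_nonempty.mp (Nat.pos_of_ne_zero hn)
    obtain ⟨i₀, hi₀⟩ := Finite.exists_min y
    have hinf : ⨅ i, y i = y i₀ := le_antisymm (iInf_le _ _) (le_iInf hi₀)
    rw [hinf]; exact h i₀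

lemma map_iInf_par {n : ℕ} (hn : n ≠ 0) {b e : ℝ} (hb : 1 < b) (he : 0 < e) :
    Measure.map (fun y : Fin n → ℝ≥0∞ => ⨅ i, y i) (Measure.pi fun _ : Fin n => par b e)
      = par b ((n:ℝ) * e) := by
  haveI := par_prob hb he
  have hne : (0:ℝ) < (n:ℝ) * e := by
    have : (0:ℝ) < (n:ℝ) := by exact_mod_cast Nat.pos_of_ne_zero hn
    positivity
  haveI := par_prob hb hne
  have hmeas : Measurable (fun y : Fin n → ℝ≥0∞ => ⨅ i, y i) :=
    Measurable.iInf fun i => measurable_pi_apply i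
  haveI : IsProbabilityMeasure
      (Measure.map (fun y : Fin n → ℝ≥0∞ => ⨅ i, y i) (Measure.pi fun _ : Fin n => par b e)) :=
    Measure.isProbabilityMeasure_map hmeas.aemeasurable
  apply Measure.ext_of_Iic
  intro a
  rcases eq_or_ne a ⊤ with rfl | ha
  · rw [Set.Iic_top, measure_univ, measure_univ]
  · rw [Measure.map_apply hmeas measurableSet_Iic]
    set s := a.toReal with hs
    have has : a = ENNReal.ofReal s := (ofReal_toReal ha).symm
    have hset : (fun y : Fin n → ℝ≥0∞ => ⨅ i, y i) ⁻¹' Set.Iic a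
        = (Set.univ.pi fun _ : Fin n => Set.Ioi a)ᶜ := by
      ext y
      simp only [Set.mem_preimage, Set.mem_Iic, Set.mem_compl_iff, Set.mem_pi, Set.mem_univ,
        Set.mem_Ioi, forall_true_left, not_forall, not_lt]
      rw [← not_lt, lt_iInf_iff_forall hn]
      push_neg
      rfl
    rw [hset, prob_compl_eq_one_sub (MeasurableSet.univ_pi fun _ => measurableSet_Ioi),
      Measure.pi_pi, Finset.prod_const, Finset.card_univ, Fintype.card_fin,
      has, par_Ioi hb he, par_Iic hb hne]
    set X := (b * max (1/b) (min s 1)) ^ (-e) with hX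
    have hbx := bx_facts hb s
    have hbx0 : (0:ℝ) ≤ b * max (1/b) (min s 1) := le_trans zero_le_one hbx
    have hX0 : (0:ℝ) ≤ X := Real.rpow_nonneg hbx0 _
    have hXn : X ^ n = (b * max (1/b) (min s 1)) ^ (-((n:ℝ) * e)) := by
      rw [hX, ← Real.rpow_natCast ((b * max (1/b) (min s 1)) ^ (-e)) n,
        ← Real.rpow_mul hbx0]
      congr 1
      ring
    rw [← ENNReal.ofReal_pow hX0, hXn, ← ENNReal.ofReal_one,
      ← ENNReal.ofReal_sub _ (Real.rpow_nonneg hbx0 _)]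

lemma vol01_lt (m : ℝ≥0∞) :
    volume.restrict (Set.Icc (0:ℝ) 1) {u : ℝ | ENNReal.ofReal u < m} = m ⊓ 1 := by
  rcases eq_or_ne m ⊤ with rfl | hm
  · have h : {u : ℝ | ENNReal.ofReal u < ⊤} = Set.univ := by
      ext u; simp [ofReal_lt_top]
    rw [h, Measure.restrict_apply_univ, Real.volume_Icc]
    simp
  · rcases eq_or_ne m 0 with rfl | hm0
    · have h : {u : ℝ | ENNReal.ofReal u < 0} = ∅ := by
        ext u; simp
      simp [h]
    · have ht0 : 0 < m.toReal := toReal_pos hm0 hm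
      have hset : {u : ℝ | ENNReal.ofReal u < m} = Set.Iio m.toReal := by
        ext u
        simp only [Set.mem_setOf_eq, Set.mem_Iio]
        rcases lt_or_ge u 0 with hu | hu
        · simp only [ENNReal.ofReal_eq_zero.mpr hu.le]
          exact iff_of_true (pos_iff_ne_zero.mpr hm0) (lt_trans hu ht0)
        · exact ENNReal.ofReal_lt_iff_lt_toReal hu hm
      rw [hset, Measure.restrict_apply measurableSet_Iio]
      rcases le_or_gt m.toReal 1 with h1 | h1
      · have h2 : Set.Iio m.toReal ∩ Set.Icc (0:ℝ) 1 = Set.Ico 0 m.toReal := by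
          ext u
          constructor
          · rintro ⟨hu1, hu2, _⟩; exact ⟨hu2, hu1⟩
          · rintro ⟨hu1, hu2⟩; exact ⟨hu2, hu1, le_trans hu2.le h1⟩
        have hm1 : m ≤ 1 := by
          rw [← ofReal_toReal hm, ← ENNReal.ofReal_one]
          exact ENNReal.ofReal_le_ofReal h1
        rw [h2, Real.volume_Ico, sub_zero, ofReal_toReal hm, inf_eq_left.mpr hm1]
      · have h2 : Set.Iio m.toReal ∩ Set.Icc (0:ℝ) 1 = Set.Icc 0 1 := by
          apply Set.inter_eq_self_of_subset_right
          intro u hu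
          exact lt_of_le_of_lt hu.2 h1
        have hm1 : (1:ℝ≥0∞) ≤ m := by
          rw [← ofReal_toReal hm, ← ENNReal.ofReal_one]
          exact ENNReal.ofReal_le_ofReal h1.le
        rw [h2, Real.volume_Icc, inf_eq_right.mpr hm1]
        norm_num

lemma nuR_eq_par (r : ℕ) (hr : 3 ≤ r) :
    nuR r = par ((r:ℝ)-1) (1/((r:ℝ)-2)) := by
  have hR : (3:ℝ) ≤ (r:ℝ) := by exact_mod_cast hr
  have h2 : (0:ℝ) < (r:ℝ)-2 := by linarith
  have h1 : (0:ℝ) < (r:ℝ)-1 := by linarith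
  rw [nuR, par]
  congr 1
  · refine congrArg _ (withDensity_congr_ae ?_)
    filter_upwards [self_mem_ae_restrict measurableSet_Ioo] with y hy
    have hy0 : (0:ℝ) < y := lt_trans (by positivity) hy.1
    congr 1
    have hexp : ((r:ℝ)-1)/((r:ℝ)-2) = 1 + 1/((r:ℝ)-2) := by field_simp; ring
    rw [hexp, Real.rpow_neg hy0.le, Real.rpow_neg h1.le]
    rw [one_div ((((r:ℝ)-2) * ((r:ℝ)-1) ^ ((1:ℝ)/((r:ℝ)-2)) * y ^ (1 + 1/((r:ℝ)-2)))),
      mul_inv, mul_inv, one_div]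
  · congr 1
    rw [Real.rpow_neg h1.le, one_div]

lemma final_int {b e : ℝ} (hb : 1 < b) (he : 0 < e) (hbe : b * e = 1 + e)
    {a : ℝ≥0∞} (ha : a ≠ ⊤) :
    ∫⁻ t, (Set.Iic a).indicator (fun t => t ⊓ 1) t ∂(par b (1+e))
      = par b e (Set.Iic a) := by
  have hb0 : (0:ℝ) < b := lt_trans one_pos hb
  have ha0 : (0:ℝ) < 1/b := by positivity
  have htop : (⊤:ℝ≥0∞) ∉ Set.Iic a := by
    simp only [Set.mem_Iic, top_le_iff]; exact ha
  have hg : Measurable ((Set.Iic a).indicator (fun t : ℝ≥0∞ => t ⊓ 1)) :=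
    (measurable_id.min measurable_const).indicator measurableSet_Iic
  have hdens1 : Measurable fun y : ℝ =>
      ENNReal.ofReal ((1+e) * b ^ (-(1+e)) * y ^ (-(1+(1+e)))) :=
    (measurable_const.mul (measurable_id.pow measurable_const)).ennreal_ofReal
  rw [par, lintegral_add_measure, lintegral_smul_measure, lintegral_dirac' _ hg,
    Set.indicator_of_notMem htop _, smul_zero, add_zero,
    lintegral_map hg ENNReal.measurable_ofReal,
    lintegral_withDensity_eq_lintegral_mul _ hdens1
      (g := fun y => (Set.Iic a).indicator (fun t => t ⊓ 1) (ENNReal.ofReal y))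
      (hg.comp ENNReal.measurable_ofReal)]
  rw [par, Measure.add_apply, Measure.smul_apply, Measure.dirac_apply' _ measurableSet_Iic,
    Set.indicator_of_notMem htop _, smul_zero, add_zero,
    Measure.map_apply ENNReal.measurable_ofReal measurableSet_Iic,
    withDensity_apply _ (ENNReal.measurable_ofReal measurableSet_Iic),
    ← lintegral_indicator (ENNReal.measurable_ofReal measurableSet_Iic)]
  apply lintegral_congr_ae
  filter_upwards [self_mem_ae_restrict measurableSet_Ioo] with y hy
  have hy0 : (0:ℝ) < y := lt_trans ha0 hy.1
  have hy1 : y < 1 := hy.2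
  simp only [Pi.mul_apply, Function.comp_apply]
  by_cases hmem : ENNReal.ofReal y ∈ Set.Iic a
  · rw [Set.indicator_of_mem hmem, Set.indicator_of_mem (Set.mem_preimage.mpr hmem)]
    have hmin : ENNReal.ofReal y ⊓ 1 = ENNReal.ofReal y :=
      inf_eq_left.mpr (ofReal_le_one.mpr hy1.le)
    rw [hmin, ← ENNReal.ofReal_mul (by positivity)]
    congr 1
    have hb1 : b ^ (-(1+e)) = b ^ (-e) * b⁻¹ := by
      rw [← Real.rpow_neg_one b, ← Real.rpow_add hb0]; congr 1; ring
    have hyy : y ^ (-(1+(1+e))) * y = y ^ (-(1+e)) := by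
      have h := Real.rpow_add hy0 (-(1+(1+e))) 1
      rw [Real.rpow_one] at h
      rw [← h]; congr 1; ring
    have hcoef : (1+e) * b⁻¹ = e := by
      field_simp
      linarith [hbe]
    calc (1+e) * b ^ (-(1+e)) * y ^ (-(1+(1+e))) * y
        = ((1+e) * b⁻¹) * b ^ (-e) * (y ^ (-(1+(1+e))) * y) := by rw [hb1]; ring
      _ = e * b ^ (-e) * y ^ (-(1+e)) := by rw [hcoef, hyy]
  · rw [Set.indicator_of_notMem hmem, Set.indicator_of_notMem
      (fun hc => hmem (Set.mem_preimage.mp hc)), mul_zero]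

/-- For `r ≥ 3`, the measure `ν^r` solves the `r`-regular frozen percolation RDE:
if `Y₁, …, Y_{r-1}` are i.i.d. `ν^r` independent of `U ~ Uniform[0,1]`, then
`Φ(Y₁ ∧ ⋯ ∧ Y_{r-1}; U)` has law `ν^r`. -/
theorem stmt_16 (r : ℕ) (hr : 3 ≤ r) :
    Measure.map (fun p : (Fin (r-1) → ℝ≥0∞) × ℝ => frozenPhi (⨅ i, p.1 i) p.2)
        ((Measure.pi fun _ : Fin (r-1) => nuR r).prod
          (volume.restrict (Set.Icc (0:ℝ) 1))) = nuR r := by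
  have hR : (3:ℝ) ≤ (r:ℝ) := by exact_mod_cast hr
  set b : ℝ := (r:ℝ)-1 with hbdef
  set e : ℝ := 1/((r:ℝ)-2) with hedef
  have h2 : (0:ℝ) < (r:ℝ)-2 := by linarith
  have hb : 1 < b := by rw [hbdef]; linarith
  have hb0 : (0:ℝ) < b := lt_trans one_pos hb
  have he : 0 < e := by rw [hedef]; positivity
  have hn : r - 1 ≠ 0 := by omega
  have hcast : ((r-1 : ℕ):ℝ) = b := by
    rw [Nat.cast_sub (by omega)]; norm_num [hbdef]
  have hne : ((r-1:ℕ):ℝ) * e = 1 + e := by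
    rw [hcast, hbdef, hedef]; field_simp; ring
  have hbe : b * e = 1 + e := by rw [← hcast, hne]
  rw [nuR_eq_par r hr]
  haveI := par_prob hb he
  haveI : IsProbabilityMeasure (volume.restrict (Set.Icc (0:ℝ) 1)) :=
    ⟨by rw [Measure.restrict_apply_univ, Real.volume_Icc]; norm_num⟩
  have hminf : Measurable (fun y : Fin (r-1) → ℝ≥0∞ => ⨅ i, y i) :=
    Measurable.iInf fun i => measurable_pi_apply i
  have hphi : Measurable (fun p : (Fin (r-1) → ℝ≥0∞) × ℝ => frozenPhi (⨅ i, p.1 i) p.2) := by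
    unfold frozenPhi
    refine Measurable.ite ?_ (hminf.comp measurable_fst) measurable_const
    exact measurableSet_lt (ENNReal.measurable_ofReal.comp measurable_snd)
      (hminf.comp measurable_fst)
  haveI : IsProbabilityMeasure
      ((Measure.pi fun _ : Fin (r-1) => par b e).prod
        (volume.restrict (Set.Icc (0:ℝ) 1))) := by infer_instance
  haveI : IsProbabilityMeasure (Measure.map
      (fun p : (Fin (r-1) → ℝ≥0∞) × ℝ => frozenPhi (⨅ i, p.1 i) p.2)
      ((Measure.pi fun _ : Fin (r-1) => par b e).prod
        (volume.restrict (Set.Icc (0:ℝ) 1)))) :=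
    Measure.isProbabilityMeasure_map hphi.aemeasurable
  apply Measure.ext_of_Iic
  intro a
  rw [Measure.map_apply hphi measurableSet_Iic]
  rcases eq_or_ne a ⊤ with rfl | ha
  · rw [Set.Iic_top, Set.preimage_univ, measure_univ, par_univ hb he]
  · have hS : (fun p : (Fin (r-1) → ℝ≥0∞) × ℝ => frozenPhi (⨅ i, p.1 i) p.2) ⁻¹' Set.Iic a
        = {p : (Fin (r-1) → ℝ≥0∞) × ℝ |
            ENNReal.ofReal p.2 < (⨅ i, p.1 i) ∧ (⨅ i, p.1 i) ≤ a} := by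
      ext p
      simp only [Set.mem_preimage, Set.mem_Iic, Set.mem_setOf_eq, frozenPhi]
      split_ifs with h
      · exact ⟨fun h2 => ⟨h, h2⟩, fun h2 => h2.2⟩
      · constructor
        · intro htop; exact absurd (top_le_iff.mp htop) ha
        · intro hc; exact absurd hc.1 h
    have hSmeas : MeasurableSet {p : (Fin (r-1) → ℝ≥0∞) × ℝ |
        ENNReal.ofReal p.2 < (⨅ i, p.1 i) ∧ (⨅ i, p.1 i) ≤ a} := by
      have h1 : MeasurableSet {p : (Fin (r-1) → ℝ≥0∞) × ℝ |
          ENNReal.ofReal p.2 < (⨅ i, p.1 i)} :=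
        measurableSet_lt (ENNReal.measurable_ofReal.comp measurable_snd)
          (hminf.comp measurable_fst)
      have h2' : MeasurableSet {p : (Fin (r-1) → ℝ≥0∞) × ℝ | (⨅ i, p.1 i) ≤ a} :=
        (hminf.comp measurable_fst) measurableSet_Iic
      exact h1.inter h2'
    rw [hS, Measure.prod_apply hSmeas]
    have hinner : ∀ y : Fin (r-1) → ℝ≥0∞,
        (volume.restrict (Set.Icc (0:ℝ) 1))
          (Prod.mk y ⁻¹' {p : (Fin (r-1) → ℝ≥0∞) × ℝ |
            ENNReal.ofReal p.2 < (⨅ i, p.1 i) ∧ (⨅ i, p.1 i) ≤ a})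
        = (Set.Iic a).indicator (fun t => t ⊓ 1) (⨅ i, y i) := by
      intro y
      by_cases hya : (⨅ i, y i) ≤ a
      · have hpre : Prod.mk y ⁻¹' {p : (Fin (r-1) → ℝ≥0∞) × ℝ |
            ENNReal.ofReal p.2 < (⨅ i, p.1 i) ∧ (⨅ i, p.1 i) ≤ a}
            = {u : ℝ | ENNReal.ofReal u < ⨅ i, y i} := by
          ext u; simp [hya]
        rw [hpre, vol01_lt,
          Set.indicator_of_mem (show (⨅ i, y i) ∈ Set.Iic a from hya) (fun t => t ⊓ 1)]
      · have hpre : Prod.mk y ⁻¹' {p : (Fin (r-1) → ℝ≥0∞) × ℝ |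
            ENNReal.ofReal p.2 < (⨅ i, p.1 i) ∧ (⨅ i, p.1 i) ≤ a} = ∅ := by
          ext u; simp [hya]
        rw [hpre, measure_empty,
          Set.indicator_of_notMem (show (⨅ i, y i) ∉ Set.Iic a from hya) (fun t => t ⊓ 1)]
    rw [lintegral_congr hinner]
    have hg : Measurable ((Set.Iic a).indicator (fun t : ℝ≥0∞ => t ⊓ 1)) :=
      (measurable_id.min measurable_const).indicator measurableSet_Iic
    rw [← lintegral_map hg hminf, map_iInf_par hn hb he, hne]
    exact final_int hb he hbe ha
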